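/- Let T be a pretriangulated category. Let X, N₊, N₋, Z be objects of T, and let φ : X → X, j⁺ : X ⊕ N₊ → Z, j⁻ : X ⊕ N₋ → Z and ∂ : Z → ΣX ⊕ ΣX be morphisms. Let ψ : X ⊕ X → (X ⊕ N₊) ⊕ (X ⊕ N₋) be the morphism whose components are: first X → X ⊕ N₊ is ι_X; second X → X ⊕ N₊ is ι_X; first X → X ⊕ N₋ is ι_X; second X → X ⊕ N₋ is ι_X ∘ φ. Suppose that the triangle X ⊕ X →ψ (X ⊕ N₊) ⊕ (X ⊕ N₋) →[j⁺,j⁻] Z →∂ Σ(X ⊕ X) is a distinguished triangle. Then there exists a morphism ∂′ : Z → ΣX such that the triangle X →(0, 1_X − φ, 0) N₊ ⊕ X ⊕ N₋ →(j⁺∘ι_{N₊}, −j⁻∘ι_X, j⁻∘ι_{N₋}) Z →∂′ ΣX is a distinguished triangle. -/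

import Mathlib

open CategoryTheory Limits Pretriangulated

/-- Let `T` be a pretriangulated category, `X, N₊, N₋, Z` objects,
`φ : X ⟶ X`, `j⁺ : X ⊞ N₊ ⟶ Z`, `j⁻ : X ⊞ N₋ ⟶ Z` and `d : Z ⟶ Σ(X ⊞ X)` morphisms.
If the triangle `X ⊞ X ⟶ψ (X ⊞ N₊) ⊞ (X ⊞ N₋) ⟶[j⁺,j⁻] Z ⟶∂ Σ(X ⊞ X)` is distinguished,
where `ψ` has components `(ι_X, ι_X; ι_X, ι_X ∘ φ)`, then there is `∂' : Z ⟶ ΣX` making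
`X ⟶(0, 1-φ, 0) N₊ ⊞ X ⊞ N₋ ⟶(j⁺∘ι_{N₊}, -j⁻∘ι_X, j⁻∘ι_{N₋}) Z ⟶∂' ΣX` distinguished. -/
theorem stmt0 {T : Type*} [Category T] [HasZeroObject T] [HasShift T ℤ]
    [Preadditive T] [∀ n : ℤ, (shiftFunctor T n).Additive] [Pretriangulated T]
    [HasBinaryBiproducts T]
    (X Np Nm Z : T) (φ : X ⟶ X)
    (jp : X ⊞ Np ⟶ Z) (jm : X ⊞ Nm ⟶ Z) (d : Z ⟶ (X ⊞ X)⟦(1 : ℤ)⟧)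
    (hdist :
      Triangle.mk
        (biprod.desc (biprod.lift biprod.inl biprod.inl)
          (biprod.lift biprod.inl (φ ≫ biprod.inl))
          : X ⊞ X ⟶ (X ⊞ Np) ⊞ (X ⊞ Nm))
        (biprod.desc jp jm) d ∈ distinguishedTriangles) :
    ∃ d' : Z ⟶ X⟦(1 : ℤ)⟧,
      Triangle.mk
        (biprod.lift (biprod.lift (0 : X ⟶ Np) (𝟙 X - φ)) (0 : X ⟶ Nm)
          : X ⟶ (Np ⊞ X) ⊞ Nm)
        (biprod.desc (biprod.desc (biprod.inr ≫ jp) (-(biprod.inl ≫ jm)))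
          (biprod.inr ≫ jm))
        d' ∈ distinguishedTriangles := by
  -- the first morphism of the goal triangle
  set f : X ⟶ (Np ⊞ X) ⊞ Nm :=
    biprod.lift (biprod.lift (0 : X ⟶ Np) (𝟙 X - φ)) (0 : X ⟶ Nm) with hf
  -- complete it to a distinguished triangle
  obtain ⟨C, g, h, hT₃⟩ := distinguished_cocone_triangle f
  -- change of basis on the source X ⊞ X
  set αh : X ⊞ X ⟶ X ⊞ X := biprod.desc biprod.inl (biprod.inl + biprod.inr) with hαh
  set αi : X ⊞ X ⟶ X ⊞ X := biprod.desc biprod.inl (biprod.inr - biprod.inl) with hαi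
  have hα₁ : αh ≫ αi = 𝟙 _ := by ext <;> simp [hαh, hαi]
  have hα₂ : αi ≫ αh = 𝟙 _ := by ext <;> simp [hαi, hαh]
  -- change of basis on the middle object
  set βh : (X ⊞ Np) ⊞ (X ⊞ Nm) ⟶ X ⊞ ((Np ⊞ X) ⊞ Nm) :=
    biprod.desc
      (biprod.lift biprod.fst (biprod.lift (biprod.lift biprod.snd biprod.fst) 0))
      (biprod.lift 0 (biprod.lift (biprod.lift 0 (-biprod.fst)) biprod.snd)) with hβh
  set βi : X ⊞ ((Np ⊞ X) ⊞ Nm) ⟶ (X ⊞ Np) ⊞ (X ⊞ Nm) :=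
    biprod.desc
      (biprod.lift (biprod.lift (𝟙 X) 0) (biprod.lift (𝟙 X) 0))
      (biprod.lift (biprod.lift 0 (biprod.fst ≫ biprod.fst))
        (biprod.lift (-(biprod.fst ≫ biprod.snd)) biprod.snd)) with hβi
  have hβ₁ : βh ≫ βi = 𝟙 _ := by ext <;> simp [hβh, hβi]
  have hβ₂ : βi ≫ βh = 𝟙 _ := by ext <;> simp [hβi, hβh]
  set ψ : X ⊞ X ⟶ (X ⊞ Np) ⊞ (X ⊞ Nm) :=
    biprod.desc (biprod.lift biprod.inl biprod.inl)
      (biprod.lift biprod.inl (φ ≫ biprod.inl)) with hψ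
  have key : ψ ≫ βh = αh ≫ biprod.map (𝟙 X) f := by
    ext <;> simp [hψ, hβh, hαh, hf, sub_eq_add_neg]
  -- the twisted triangle T₂
  set T₂ : Triangle T :=
    Triangle.mk (biprod.map (𝟙 X) f) (βi ≫ biprod.desc jp jm)
      (d ≫ (shiftFunctor T (1 : ℤ)).map αh) with hT₂def
  have hT₂ : T₂ ∈ distinguishedTriangles := by
    refine isomorphic_distinguished _ hdist _ ?_
    refine Triangle.isoMk _ _ ⟨αi, αh, hα₂, hα₁⟩ ⟨βi, βh, hβ₂, hβ₁⟩ (Iso.refl Z) ?_ ?_ ?_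
    · -- biprod.map 𝟙 f ≫ βi = αi ≫ ψ
      show biprod.map (𝟙 X) f ≫ βi = αi ≫ ψ
      have h1 : αi ≫ ψ ≫ βh = biprod.map (𝟙 X) f := by
        rw [key, ← Category.assoc, hα₂, Category.id_comp]
      rw [← h1]
      simp only [Category.assoc, hβ₁, Category.comp_id]
    · show (βi ≫ biprod.desc jp jm) ≫ 𝟙 Z = βi ≫ biprod.desc jp jm
      simp
    · show (d ≫ (shiftFunctor T (1 : ℤ)).map αh) ≫ (shiftFunctor T (1 : ℤ)).map αi =
        𝟙 Z ≫ d
      rw [Category.assoc, ← Functor.map_comp, hα₁]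
      simp
  -- the contractible triangle and the product family
  set F : Bool → Triangle T := fun b => match b with
    | false => contractibleTriangle X
    | true => Triangle.mk f g h with hF
  have hFd : ∀ b, F b ∈ distinguishedTriangles := by
    rintro (_ | _)
    · exact contractible_distinguished X
    · exact hT₃
  have hS := productTriangle_distinguished F hFd
  set S := productTriangle F with hSdef
  -- isos on the first two objects
  set e₁h : X ⊞ X ⟶ ∏ᶜ (fun b => (F b).obj₁) :=
    Pi.lift (fun b => match b with
      | false => (biprod.fst : X ⊞ X ⟶ X)
      | true => (biprod.snd : X ⊞ X ⟶ X)) with he₁h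
  set e₁i : (∏ᶜ (fun b => (F b).obj₁)) ⟶ X ⊞ X :=
    biprod.lift (Pi.π _ false) (Pi.π _ true) with he₁i
  have he₁ : e₁h ≫ e₁i = 𝟙 _ := by ext <;> simp [he₁h, he₁i] <;>
    first | (erw [biprod.lift_fst, Pi.lift_π]; simp) | (erw [biprod.lift_snd, Pi.lift_π]; simp)
  have he₁' : e₁i ≫ e₁h = 𝟙 _ := by
    apply limit.hom_ext
    rintro ⟨_ | _⟩ <;>
    · simp [he₁h, he₁i, Pi.π]
      first
      | exact biprod.lift_fst _ _
      | exact biprod.lift_snd _ _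
  set e₂h : X ⊞ ((Np ⊞ X) ⊞ Nm) ⟶ ∏ᶜ (fun b => (F b).obj₂) :=
    Pi.lift (fun b => match b with
      | false => (biprod.fst : X ⊞ ((Np ⊞ X) ⊞ Nm) ⟶ X)
      | true => (biprod.snd : X ⊞ ((Np ⊞ X) ⊞ Nm) ⟶ (Np ⊞ X) ⊞ Nm)) with he₂h
  set e₂i : (∏ᶜ (fun b => (F b).obj₂)) ⟶ X ⊞ ((Np ⊞ X) ⊞ Nm) :=
    biprod.lift (Pi.π _ false) (Pi.π _ true) with he₂i
  have he₂ : e₂h ≫ e₂i = 𝟙 _ := by ext <;> simp [he₂h, he₂i] <;>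
    first
    | (erw [biprod.lift_fst, Pi.lift_π]; simp)
    | (erw [biprod.lift_snd, Pi.lift_π]; simp)
    | (erw [biprod.lift_snd_assoc, Pi.lift_π_assoc]; simp <;>
        first
        | (erw [biprod.inl_snd_assoc]; simp)
        | (erw [biprod.inr_fst_assoc]; simp)
        | (erw [biprod.inl_fst_assoc]; simp)
        | (erw [biprod.inr_snd_assoc]; simp)
        | skip)
  have he₂' : e₂i ≫ e₂h = 𝟙 _ := by
    apply limit.hom_ext
    rintro ⟨_ | _⟩ <;>
    · simp [he₂h, he₂i, Pi.π]
      first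
      | exact biprod.lift_fst _ _
      | exact biprod.lift_snd _ _
  have comm : T₂.mor₁ ≫ e₂h = e₁h ≫ S.mor₁ := by
    show biprod.map (𝟙 X) f ≫ e₂h = e₁h ≫ (productTriangle F).mor₁
    apply limit.hom_ext
    rintro ⟨_ | _⟩
    · have hz : (F false).mor₁ = 𝟙 X := rfl
      simp [he₁h, he₂h, Pi.π, productTriangle, hz]
      first
      | rfl
      | exact biprod.map_fst _ _
      | (erw [Category.assoc, Pi.map_π, Pi.lift_π_assoc]; exact biprod.map_fst _ _)
    · have hz : (F true).mor₁ = f := rfl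
      simp [he₁h, he₂h, Pi.π, productTriangle, hz]
      first
      | rfl
      | exact biprod.map_snd _ _
      | (erw [Category.assoc, Pi.map_π, Pi.lift_π_assoc]; exact biprod.map_snd _ _)
  set iso23 := isoTriangleOfIso₁₂ T₂ S hT₂ hS ⟨e₁h, e₁i, he₁, he₁'⟩ ⟨e₂h, e₂i, he₂, he₂'⟩ comm
    with hiso23
  set isoZ : Z ≅ S.obj₃ := Triangle.π₃.mapIso iso23 with hisoZ
  set θ : Z ⟶ ∏ᶜ (fun b => (F b).obj₃) := isoZ.hom with hθ
  have hcomm₂ : T₂.mor₂ ≫ θ = e₂h ≫ S.mor₂ := by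
    have h2 := iso23.hom.comm₂
    have h3 : iso23.hom.hom₂ = e₂h := by rw [hiso23]; rfl
    rw [h3] at h2
    exact h2
  -- projection to C is an iso
  set pC : (∏ᶜ (fun b => (F b).obj₃)) ⟶ C := Pi.π _ true with hpC
  set qC : C ⟶ ∏ᶜ (fun b => (F b).obj₃) :=
    Pi.lift (fun b => match b with | false => 0 | true => 𝟙 C) with hqC
  have hq₁ : qC ≫ pC = 𝟙 C := by rw [hqC, hpC]; erw [Pi.lift_π]
  have hq₂ : pC ≫ qC = 𝟙 _ := by
    apply limit.hom_ext; rintro ⟨_ | _⟩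
    · exact (isZero_zero T).eq_of_tgt _ _
    · rw [hqC, hpC]; erw [Category.assoc, Pi.lift_π, Category.comp_id]; exact (Category.id_comp _).symm
  set u : Z ⟶ C := θ ≫ pC with hu
  set v : C ⟶ Z := qC ≫ isoZ.inv with hv
  have huv : u ≫ v = 𝟙 Z := by
    erw [hu, hv, Category.assoc, ← Category.assoc pC, hq₂, Category.id_comp, hθ,
      Iso.hom_inv_id]
  have hvu : v ≫ u = 𝟙 C := by
    erw [hv, hu, Category.assoc, hθ, ← Category.assoc _ isoZ.hom, Iso.inv_hom_id,
      Category.id_comp, hq₁]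
  -- the second morphism of the goal triangle factors through T₂
  have hmor₂ : (biprod.desc (biprod.desc (biprod.inr ≫ jp) (-(biprod.inl ≫ jm)))
      (biprod.inr ≫ jm) : (Np ⊞ X) ⊞ Nm ⟶ Z) = biprod.inr ≫ T₂.mor₂ := by
    show _ = biprod.inr ≫ βi ≫ biprod.desc jp jm
    ext <;> simp [hβi, biprod.lift_eq]
  refine ⟨u ≫ h, isomorphic_distinguished _ hT₃ _ ?_⟩
  have e2 : S.mor₂ ≫ pC = Pi.π (fun b => (F b).obj₂) true ≫ g := by
    show (productTriangle F).mor₂ ≫ Pi.π _ true = _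
    simp [productTriangle, Pi.π]
    exact Pi.map_π _ true
  have e3 : (biprod.inr ≫ e₂h) ≫ Pi.π (fun b => (F b).obj₂) true =
      𝟙 ((Np ⊞ X) ⊞ Nm) := by
    rw [Category.assoc, he₂h]
    simp [Pi.π]
    exact biprod.inr_snd
  refine Triangle.isoMk _ _ (Iso.refl X) (Iso.refl _) ⟨u, v, huv, hvu⟩ ?_ ?_ ?_
  · simp [hf]
    exact (Category.comp_id _).trans (Category.id_comp _).symm
  · dsimp
    erw [Category.id_comp, hmor₂, hu]
    calc (biprod.inr ≫ T₂.mor₂) ≫ θ ≫ pC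
        = biprod.inr ≫ (T₂.mor₂ ≫ θ) ≫ pC :=
          (Category.assoc _ _ _).trans (congrArg (biprod.inr ≫ ·) (Category.assoc _ _ _).symm)
      _ = biprod.inr ≫ (e₂h ≫ S.mor₂) ≫ pC := congrArg (fun k => biprod.inr ≫ k ≫ pC) hcomm₂
      _ = (biprod.inr ≫ e₂h) ≫ S.mor₂ ≫ pC :=
          (congrArg (biprod.inr ≫ ·) (Category.assoc _ _ _)).trans (Category.assoc _ _ _).symm
      _ = (biprod.inr ≫ e₂h) ≫ Pi.π (fun b => (F b).obj₂) true ≫ g :=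
          congrArg ((biprod.inr ≫ e₂h) ≫ ·) e2
      _ = ((biprod.inr ≫ e₂h) ≫ Pi.π (fun b => (F b).obj₂) true) ≫ g :=
          (Category.assoc _ _ _).symm
      _ = g := by rw [e3]; exact Category.id_comp g
  · simp
    exact (congrArg (fun k => (u ≫ h) ≫ k) (CategoryTheory.Functor.map_id _ _)).trans (Category.comp_id _)
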